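/- arXiv:1412.7088 — 5 statements merged into one kernel-verified Lean document; each statement's English description precedes it below -/
import Mathlib

section
/- Let n ≥ 1, ω ∈ ℝⁿ, and define the linear form L(x) = ω·x. For a real number y write ‖y‖ for its distance to the nearest integer. Let A, X > 0 and suppose there is no x ∈ ℤⁿ∖{0} with ‖L(x)‖ ≤ A and |x_i| ≤ X for all i = 1,…,n. Then for every α ∈ ℝ there exists x ∈ ℤⁿ with ‖L(x) − α‖ ≤ A₁ and |x_i| ≤ X₁ for all i, where h = X^{-n}A^{-1}, A₁ = (1/2)(h+1)A and X₁ = (1/2)(h+1)X. -/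
/-- `distToInt y` is the distance from the real number `y` to the nearest integer. -/
noncomputable def distToInt (y : ℝ) : ℝ := |y - (round y : ℝ)|

open Finset Pointwise

set_option maxHeartbeats 4000000

lemma distToInt_le_abs_sub_int (y : ℝ) (k : ℤ) : distToInt y ≤ |y - (k:ℝ)| := by
  unfold distToInt
  by_cases h : k = round y
  · subst h; exact le_refl _
  · have h1 : |y - (round y : ℝ)| ≤ 1/2 := abs_sub_round y
    have h2 : (1:ℝ) ≤ |(k : ℝ) - (round y : ℝ)| := by
      have hne : (k - round y : ℤ) ≠ 0 := sub_ne_zero.mpr h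
      have := Int.one_le_abs hne
      calc (1:ℝ) ≤ |((k - round y : ℤ) : ℝ)| := by exact_mod_cast this
        _ = |(k:ℝ) - (round y : ℝ)| := by push_cast; ring_nf
    have tri : |(k : ℝ) - (round y : ℝ)| ≤ |y - (k:ℝ)| + |y - (round y:ℝ)| := by
      calc |(k : ℝ) - (round y : ℝ)| = |((k:ℝ) - y) + (y - round y)| := by ring_nf
        _ ≤ |(k:ℝ) - y| + |y - (round y:ℝ)| := abs_add_le _ _
        _ = |y - (k:ℝ)| + |y - (round y:ℝ)| := by rw [abs_sub_comm]
    linarith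

lemma distToInt_le_half (y : ℝ) : distToInt y ≤ 1/2 := abs_sub_round y

theorem thmD (Q : ℕ) [NeZero Q] (V : Finset (ZMod Q)) :
    ∀ S : Finset (ZMod Q), S.Nonempty → V.Nonempty →
      min Q (S.card + V.card) ≤ (S + V + ({0, 1} : Finset (ZMod Q))).card := by
  induction V using Finset.strongInduction with
  | _ V ih =>
  intro S hS hV
  by_cases hcrit : ∃ e : ZMod Q, (∃ v ∈ V, v + e ∈ S) ∧ (∃ v ∈ V, v + e ∉ S)
  · obtain ⟨e, ⟨v₁, hv₁, hv₁S⟩, ⟨v₂, hv₂, hv₂S⟩⟩ := hcrit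
    set V' := V.filter (fun v => v + e ∈ S) with hV'def
    have hV'ne : V'.Nonempty := ⟨v₁, mem_filter.mpr ⟨hv₁, hv₁S⟩⟩
    have hV'ss : V' ⊂ V := Finset.filter_ssubset.mpr ⟨v₂, hv₂, hv₂S⟩
    set S' := S ∪ V.image (· + e) with hS'def
    have hS'ne : S'.Nonempty := hS.mono Finset.subset_union_left
    have hinter : S ∩ V.image (· + e) = V'.image (· + e) := by
      ext z
      simp only [mem_inter, mem_image, hV'def, mem_filter]
      constructor
      · rintro ⟨hzS, v, hv, rfl⟩; exact ⟨v, ⟨hv, hzS⟩, rfl⟩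
      · rintro ⟨v, ⟨hv, hvS⟩, rfl⟩; exact ⟨hvS, v, hv, rfl⟩
    have hcard : S'.card + V'.card = S.card + V.card := by
      have h1 := Finset.card_union_add_card_inter S (V.image (· + e))
      rw [hinter] at h1
      rw [Finset.card_image_of_injective V' (add_left_injective e),
        Finset.card_image_of_injective V (add_left_injective e)] at h1
      rw [hS'def]
      omega
    have hsub : S' + V' ⊆ S + V := by
      intro z hz
      rw [Finset.mem_add] at hz
      obtain ⟨a, ha, b, hb, rfl⟩ := hz
      have hbV : b ∈ V := (mem_filter.mp hb).1
      have hbe : b + e ∈ S := (mem_filter.mp hb).2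
      rcases mem_union.mp ha with haS | haI
      · exact Finset.mem_add.mpr ⟨a, haS, b, hbV, rfl⟩
      · obtain ⟨v, hv, rfl⟩ := mem_image.mp haI
        exact Finset.mem_add.mpr ⟨b + e, hbe, v, hv, by ring⟩
    calc min Q (S.card + V.card) = min Q (S'.card + V'.card) := by rw [hcard]
      _ ≤ (S' + V' + ({0,1} : Finset (ZMod Q))).card := ih V' hV'ss S' hS'ne hV'ne
      _ ≤ (S + V + ({0,1} : Finset (ZMod Q))).card := by
          apply Finset.card_le_card
          intro z hz
          rw [Finset.mem_add] at hz ⊢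
          obtain ⟨a, ha, d, hd, rfl⟩ := hz
          exact ⟨a, hsub ha, d, hd, rfl⟩
  · push_neg at hcrit
    have key : ∀ (x v v' : ZMod Q), v ∈ V → v' ∈ V → x + v ∈ S → x + v' ∈ S := by
      intro x v v' hv hv' hxv
      have := hcrit x ⟨v, hv, by rwa [add_comm]⟩ v' hv'
      rwa [add_comm] at this
    obtain ⟨v₀, hv₀⟩ := hV
    have himg : S + V = S.image (· + v₀) := by
      ext z
      rw [Finset.mem_add, mem_image]
      constructor
      · rintro ⟨s, hs, v, hv, rfl⟩
        refine ⟨s - v₀ + v, key _ _ _ hv₀ hv (by simpa), by ring⟩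
      · rintro ⟨s, hs, rfl⟩
        exact ⟨s, hs, v₀, hv₀, rfl⟩
    have haux : ∀ T : Finset (ZMod Q), T + ({0,1} : Finset (ZMod Q)) = T ∪ T.image (· + 1) := by
      intro T
      ext z
      rw [Finset.mem_add, mem_union, mem_image]
      constructor
      · rintro ⟨a, ha, d, hd, rfl⟩
        rcases mem_insert.mp hd with rfl | hd1
        · left; simpa using ha
        · right; rw [mem_singleton] at hd1; subst hd1; exact ⟨a, ha, rfl⟩
      · rintro (hz | ⟨a, ha, rfl⟩)
        · exact ⟨z, hz, 0, mem_insert_self _ _, by ring⟩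
        · exact ⟨a, ha, 1, by simp, rfl⟩
    set B := S.filter (fun s => s + 1 ∉ S) with hBdef
    have hcardSV : (S + V + ({0,1} : Finset (ZMod Q))).card = S.card + B.card := by
      rw [himg, haux]
      have himgim : (S.image (· + v₀)).image (· + 1) = (S.image (· + 1)).image (· + v₀) := by
        rw [Finset.image_image, Finset.image_image]
        congr 1
        ext s
        simp [add_assoc, add_comm]
      rw [himgim, ← Finset.image_union]
      rw [Finset.card_image_of_injective _ (add_left_injective v₀)]
      have hd : S ∪ S.image (· + 1) = S ∪ (S.image (· + 1) \ S) := by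
        rw [Finset.union_sdiff_self_eq_union]
      rw [hd, Finset.card_union_of_disjoint (Finset.disjoint_sdiff)]
      congr 1
      have : S.image (· + 1) \ S = B.image (· + 1) := by
        ext z
        simp only [mem_sdiff, mem_image, hBdef, mem_filter]
        constructor
        · rintro ⟨⟨s, hs, rfl⟩, hz⟩; exact ⟨s, ⟨hs, hz⟩, rfl⟩
        · rintro ⟨s, ⟨hs, hz⟩, rfl⟩; exact ⟨⟨s, hs, rfl⟩, hz⟩
      rw [this, Finset.card_image_of_injective _ (add_left_injective 1)]
    rcases Finset.eq_empty_or_nonempty B with hBe | ⟨b₀, hb₀⟩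
    · -- S is closed under +1, hence S = univ
      have hstep : ∀ s ∈ S, s + 1 ∈ S := by
        intro s hs
        by_contra hcon
        exact (Finset.eq_empty_iff_forall_notMem.mp hBe s) (mem_filter.mpr ⟨hs, hcon⟩)
      have hk : ∀ k : ℕ, ∀ s ∈ S, s + (k : ZMod Q) ∈ S := by
        intro k
        induction k with
        | zero => intro s hs; simpa
        | succ k ihk =>
          intro s hs
          have := hstep _ (ihk s hs)
          push_cast
          rw [← add_assoc]
          exact this
      have hSuniv : S = Finset.univ := by
        apply Finset.eq_univ_of_forall
        intro z
        obtain ⟨s₀, hs₀⟩ := hS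
        have := hk (z - s₀).val s₀ hs₀
        rwa [ZMod.natCast_val, ZMod.cast_id, add_sub_cancel] at this
      have : Q ≤ (S + V + ({0,1} : Finset (ZMod Q))).card := by
        rw [hcardSV, hSuniv]
        simp [ZMod.card]
      exact le_trans (min_le_left _ _) this
    · have hb₀S : b₀ ∈ S := (mem_filter.mp hb₀).1
      have hb₀1 : b₀ + 1 ∉ S := (mem_filter.mp hb₀).2
      have hmaps : ∀ v ∈ V, b₀ - v₀ + v ∈ B := by
        intro v hv
        apply mem_filter.mpr
        constructor
        · exact key _ _ _ hv₀ hv (by simpa)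
        · intro hcon
          have h2 : (b₀ - v₀ + 1) + v ∈ S := by
            have : (b₀ - v₀ + 1) + v = (b₀ - v₀ + v) + 1 := by ring
            rwa [this]
          have h3 := key _ _ _ hv hv₀ h2
          have : (b₀ - v₀ + 1) + v₀ = b₀ + 1 := by ring
          rw [this] at h3
          exact hb₀1 h3
      have hinj : Set.InjOn (fun v => b₀ - v₀ + v) V := by
        intro a _ b _ h
        simpa using h
      have hVB : V.card ≤ B.card := Finset.card_le_card_of_injOn _ hmaps hinj
      rw [hcardSV]
      exact le_trans (min_le_right _ _) (by omega)

/-- Non-homogeneous Dirichlet theorem (Cassels): if the linear form `L(x) = ω·x` admits no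
nonzero integer vector `x` with `‖L(x)‖ ≤ A` and `|x_i| ≤ X`, then for every `α ∈ ℝ` the
inhomogeneous problem `‖L(x) - α‖ ≤ A₁`, `|x_i| ≤ X₁` has an integer solution, where
`h = X^{-n} A^{-1}`, `A₁ = (1/2)(h+1)A` and `X₁ = (1/2)(h+1)X`. -/
theorem nonhomogeneous_dirichlet
    (n : ℕ) (hn : 1 ≤ n) (ω : Fin n → ℝ) (A X : ℝ) (hA : 0 < A) (hX : 0 < X)
    (hno : ¬ ∃ x : Fin n → ℤ, x ≠ 0 ∧
      distToInt (∑ i, ω i * (x i : ℝ)) ≤ A ∧ ∀ i, |(x i : ℝ)| ≤ X) :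
    ∀ α : ℝ, ∃ x : Fin n → ℤ,
      distToInt ((∑ i, ω i * (x i : ℝ)) - α) ≤ (1 / 2) * ((X ^ n)⁻¹ * A⁻¹ + 1) * A ∧
      ∀ i, |(x i : ℝ)| ≤ (1 / 2) * ((X ^ n)⁻¹ * A⁻¹ + 1) * X := by
  intro α
  have hXn : (0:ℝ) < X ^ n := pow_pos hX n
  by_cases htriv : 1 ≤ (X ^ n)⁻¹ + A
  · refine ⟨0, ?_, ?_⟩
    · have h0 : (∑ i, ω i * ((0 : Fin n → ℤ) i : ℝ)) = 0 := by simp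
      rw [h0]
      calc distToInt (0 - α) ≤ 1/2 := distToInt_le_half _
        _ ≤ (1 / 2) * ((X ^ n)⁻¹ * A⁻¹ + 1) * A := by
            have : (1 / 2) * ((X ^ n)⁻¹ * A⁻¹ + 1) * A = ((X ^ n)⁻¹ + A) / 2 := by
              field_simp
            rw [this]; linarith
    · intro i
      simp only [Pi.zero_apply, Int.cast_zero, abs_zero]
      positivity
  · push_neg at htriv
    -- nontrivial case
    have hX1 : 1 < X := by
      by_contra hc
      push_neg at hc
      have h1 : X ^ n ≤ 1 := pow_le_one₀ hX.le hc
      have h2 : (1:ℝ) ≤ (X ^ n)⁻¹ := one_le_inv_iff₀.mpr ⟨hXn, h1⟩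
      linarith
    have hA1 : A < 1 := by
      have : (0:ℝ) < (X ^ n)⁻¹ := by positivity
      linarith
    set M : ℕ := ⌊X⌋₊ with hMdef
    have hM1 : 1 ≤ M := Nat.le_floor (by exact_mod_cast hX1.le)
    have hMX : (M:ℝ) ≤ X := Nat.floor_le hX.le
    have hXM : X < M + 1 := Nat.lt_floor_add_one X
    clear_value M
    set Lf : (Fin n → ℤ) → ℝ := fun x => ∑ i, ω i * (x i : ℝ) with hLfdef
    have hLadd : ∀ x y : Fin n → ℤ, Lf (x + y) = Lf x + Lf y := by
      intro x y
      simp only [hLfdef, Pi.add_apply, Int.cast_add, mul_add]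
      rw [Finset.sum_add_distrib]
    have hLsub : ∀ x y : Fin n → ℤ, Lf (x - y) = Lf x - Lf y := by
      intro x y
      simp only [hLfdef, Pi.sub_apply, Int.cast_sub, mul_sub]
      rw [Finset.sum_sub_distrib]
    set W : ℝ := ∑ i, ω i with hWdef
    have hLshift : ∀ (x : Fin n → ℤ) (s : ℤ), Lf (fun i => x i - s) = Lf x - s * W := by
      intro x s
      simp only [hLfdef, Int.cast_sub, mul_sub, hWdef]
      rw [Finset.sum_sub_distrib, Finset.mul_sum]
      congr 1
      apply Finset.sum_congr rfl
      intro i _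
      ring
    set G : Finset (Fin n → ℤ) := Fintype.piFinset (fun _ => Finset.Icc (0:ℤ) M) with hGdef
    have hGcard : G.card = (M+1)^n := by
      rw [hGdef, Fintype.card_piFinset]
      simp [Int.card_Icc]
    set N : ℕ := G.card with hNdef
    have hmemG : ∀ g : Fin n → ℤ, g ∈ G ↔ ∀ i, 0 ≤ g i ∧ g i ≤ M := by
      intro g
      rw [hGdef, Fintype.mem_piFinset]
      simp only [Finset.mem_Icc]
    have hg0 : (fun _ => (0:ℤ)) ∈ G := by rw [hmemG]; intro i; omega
    have hg1 : (fun _ => (1:ℤ)) ∈ G := by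
      rw [hmemG]; intro i; constructor; omega
      exact_mod_cast hM1
    have hsep : ∀ g ∈ G, ∀ g' ∈ G, g ≠ g' → A < distToInt (Lf g - Lf g') := by
      intro g hg g' hg' hne
      rw [← hLsub]
      by_contra hc
      push_neg at hc
      apply hno
      refine ⟨g - g', sub_ne_zero.mpr hne, hc, ?_⟩
      intro i
      have h1 := (hmemG g).mp hg i
      have h2 := (hmemG g').mp hg' i
      have hble : |(g i - g' i : ℤ)| ≤ (M:ℤ) := by rw [abs_le]; omega
      calc |((g - g') i : ℝ)| = |((g i - g' i : ℤ) : ℝ)| := by norm_num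
        _ ≤ ((M:ℤ) : ℝ) := by exact_mod_cast hble
        _ ≤ X := by exact_mod_cast hMX
    -- the minimal excess separation η
    set pairs : Finset ((Fin n → ℤ) × (Fin n → ℤ)) := (G ×ˢ G).filter (fun p => p.1 ≠ p.2)
      with hpairsdef
    have hpairsne : pairs.Nonempty := by
      refine ⟨⟨(fun _ => (0:ℤ)), (fun _ => (1:ℤ))⟩, ?_⟩
      rw [hpairsdef, Finset.mem_filter]
      refine ⟨Finset.mem_product.mpr ⟨hg0, hg1⟩, ?_⟩
      intro hcon
      have := congrFun hcon ⟨0, by omega⟩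
      norm_num at this
    set ηs : Finset ℝ := pairs.image (fun p => distToInt (Lf p.1 - Lf p.2) - A) with hηsdef
    set η : ℝ := ηs.min' (hpairsne.image _) with hηdef
    have hηpos : 0 < η := by
      have hmem := ηs.min'_mem (hpairsne.image _)
      rw [← hηdef] at hmem
      rw [hηsdef] at hmem
      obtain ⟨p, hp, hpe⟩ := Finset.mem_image.mp hmem
      rw [hpairsdef, Finset.mem_filter, Finset.mem_product] at hp
      have := hsep p.1 hp.1.1 p.2 hp.1.2 hp.2
      rw [← hpe]
      linarith
    have hηle : ∀ g ∈ G, ∀ g' ∈ G, g ≠ g' → A + η ≤ distToInt (Lf g - Lf g') := by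
      intro g hg g' hg' hne
      have hm : distToInt (Lf g - Lf g') - A ∈ ηs := by
        rw [hηsdef]
        apply Finset.mem_image.mpr
        refine ⟨⟨g, g'⟩, ?_, rfl⟩
        rw [hpairsdef, Finset.mem_filter, Finset.mem_product]
        exact ⟨⟨hg, hg'⟩, hne⟩
      have := ηs.min'_le _ hm
      rw [← hηdef] at this
      linarith
    clear_value η
    clear hηdef hηsdef hpairsne hpairsdef
    clear ηs pairs
    have hNpos : 0 < N := Finset.card_pos.mpr ⟨_, hg0⟩
    have hNval : ((M:ℝ)+1)^n = (N:ℝ) := by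
      rw [hGcard]; push_cast; ring
    clear_value N Lf W G
    clear hGdef
    have hNposR : (0:ℝ) < (N:ℝ) * A := by positivity
    set m : ℕ := ⌊((N:ℝ) * A)⁻¹⌋₊ + 1 with hmdef
    have hmpos : 0 < m := by omega
    have hm1 : 1 < (m:ℝ) * ((N:ℝ) * A) := by
      have h1 : ((N:ℝ) * A)⁻¹ < m := by
        rw [hmdef]; push_cast; exact Nat.lt_floor_add_one _
      calc 1 = ((N:ℝ) * A)⁻¹ * ((N:ℝ) * A) := by field_simp
        _ < (m:ℝ) * ((N:ℝ) * A) := by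
            apply mul_lt_mul_of_pos_right h1 hNposR
    have hm2 : (m:ℝ) ≤ ((N:ℝ) * A)⁻¹ + 1 := by
      rw [hmdef]; push_cast
      have := Nat.floor_le (le_of_lt (by positivity : (0:ℝ) < ((N:ℝ)*A)⁻¹))
      linarith
    have hXnN : X ^ n < (N:ℝ) := by
      rw [← hNval]
      apply pow_lt_pow_left₀ hXM hX.le (by omega)
    have hmlt : (m:ℝ) < (X ^ n)⁻¹ * A⁻¹ + 1 := by
      have h1 : ((N:ℝ) * A)⁻¹ < (X ^ n)⁻¹ * A⁻¹ := by
        rw [← mul_inv]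
        apply inv_strictAnti₀ (by positivity)
        exact mul_lt_mul_of_pos_right hXnN hA
      linarith
    clear_value m
    set ε : ℝ := (X ^ n)⁻¹ * A⁻¹ + 1 - (m:ℝ) with hεdef
    have hεpos : 0 < ε := by rw [hεdef]; linarith
    clear_value ε
    -- discretization parameter Q
    set Q : ℕ := ⌈3/η⌉₊ + ⌈2*((m:ℝ)+1)/(ε*A)⌉₊ + 2 with hQdef
    have hQ2 : 2 ≤ Q := by omega
    have hQposR : (0:ℝ) < Q := by
      have : 0 < Q := by omega
      exact_mod_cast this
    have hQη : 3 ≤ η * Q := by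
      have h1 : (3/η : ℝ) ≤ ⌈3/η⌉₊ := Nat.le_ceil _
      have h2 : ((⌈3/η⌉₊ : ℕ) : ℝ) ≤ Q := by
        rw [hQdef]; push_cast; linarith [Nat.cast_nonneg (α := ℝ) ⌈2*((m:ℝ)+1)/(ε*A)⌉₊]
      have h3 : (3/η : ℝ) ≤ Q := le_trans h1 h2
      calc (3:ℝ) = (3/η) * η := by field_simp
        _ ≤ (Q:ℝ) * η := mul_le_mul_of_nonneg_right h3 hηpos.le
        _ = η * Q := by ring
    have hQm : ((m:ℝ)+1) / Q ≤ ε*A/2 := by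
      have h1 : (2*((m:ℝ)+1)/(ε*A) : ℝ) ≤ ⌈2*((m:ℝ)+1)/(ε*A)⌉₊ := Nat.le_ceil _
      have h2 : ((⌈2*((m:ℝ)+1)/(ε*A)⌉₊ : ℕ) : ℝ) ≤ Q := by
        rw [hQdef]; push_cast; linarith [Nat.cast_nonneg (α := ℝ) ⌈3/η⌉₊]
      have h3 : (2*((m:ℝ)+1)/(ε*A) : ℝ) ≤ Q := le_trans h1 h2
      have hεA : (0:ℝ) < ε * A := by positivity
      rw [div_le_iff₀ hεA] at h3
      rw [div_le_iff₀ hQposR]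
      nlinarith
    clear_value Q
    -- arc width w
    set w : ℕ := ⌈A*(Q:ℝ)⌉₊ with hwdef
    have hw1 : A*(Q:ℝ) ≤ w := Nat.le_ceil _
    have hw2 : (w:ℝ) ≤ A*Q + 1 := by
      have := Nat.ceil_lt_add_one (by positivity : (0:ℝ) ≤ A*(Q:ℝ))
      rw [hwdef]
      linarith
    have hwpos : 0 < w := by
      rw [hwdef]; apply Nat.ceil_pos.mpr; positivity
    have hwQ : w ≤ Q := by
      rw [hwdef]
      apply Nat.ceil_le.mpr
      nlinarith
    clear_value w
    haveI : NeZero Q := ⟨by omega⟩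
    set c : (Fin n → ℤ) → ℤ := fun g => ⌊(Q:ℝ) * Lf g⌋ with hcdef
    have hc1 : ∀ g, (c g : ℝ) ≤ (Q:ℝ) * Lf g := fun g => Int.floor_le _
    have hc2 : ∀ g, (Q:ℝ) * Lf g - 1 < c g := fun g => Int.sub_one_lt_floor _
    clear_value c
    set Vb : Finset (ZMod Q) := (G ×ˢ Finset.range w).image
      (fun p => ((c p.1 + p.2 : ℤ) : ZMod Q)) with hVbdef
    clear_value Vb
    have hinjV : Set.InjOn (fun p : (Fin n → ℤ) × ℕ => ((c p.1 + p.2 : ℤ) : ZMod Q))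
        ↑(G ×ˢ Finset.range w) := by
      rintro ⟨g, u⟩ hgu ⟨g', u'⟩ hgu' heq
      have hgu2 := Finset.mem_product.mp (Finset.mem_coe.mp hgu)
      have hgu2' := Finset.mem_product.mp (Finset.mem_coe.mp hgu')
      have hgG : g ∈ G := hgu2.1
      have hgG' : g' ∈ G := hgu2'.1
      have huw : u < w := Finset.mem_range.mp hgu2.2
      have huw' : u' < w := Finset.mem_range.mp hgu2'.2
      simp only at heq
      have hdvd : ((( (c g + u) - (c g' + u') : ℤ)) : ZMod Q) = 0 := by
        push_cast at heq ⊢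
        rw [sub_eq_zero]
        exact_mod_cast heq
      obtain ⟨k, hk⟩ := (ZMod.intCast_zmod_eq_zero_iff_dvd _ _).mp hdvd
      have hgg : g = g' := by
        by_contra hne
        have hsep' := hηle g hgG g' hgG' hne
        have hkR : ((c g : ℝ) + u) - ((c g' : ℝ) + u') = (Q:ℝ) * k := by
          exact_mod_cast hk
        have hb1 := hc1 g
        have hb2 := hc2 g
        have hb3 := hc1 g'
        have hb4 := hc2 g'
        have huR : (u:ℝ) ≤ w - 1 := by
          have : (u:ℝ) + 1 ≤ w := by exact_mod_cast huw
          linarith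
        have huR' : (u':ℝ) ≤ w - 1 := by
          have : (u':ℝ) + 1 ≤ w := by exact_mod_cast huw'
          linarith
        have habs : |(Lf g - Lf g') - k| < A + η := by
          rw [abs_lt]
          have hQw : (w:ℝ) + 1 < (A + η) * Q := by
            have h3Q : 3 ≤ η * Q := hQη
            nlinarith
          constructor
          · have : (Q:ℝ) * (Lf g - Lf g' - k) > -(w + 1) := by nlinarith
            nlinarith
          · have : (Q:ℝ) * (Lf g - Lf g' - k) < w + 1 := by nlinarith
            nlinarith
        have := distToInt_le_abs_sub_int (Lf g - Lf g') k
        linarith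
      subst hgg
      have hu1 : (u:ℤ) - u' = Q * k := by omega
      have : u = u' := by
        have h1 : (u:ℤ) < Q := by exact_mod_cast lt_of_lt_of_le huw hwQ
        have h2 : (u':ℤ) < Q := by exact_mod_cast lt_of_lt_of_le huw' hwQ
        have := Int.eq_zero_of_abs_lt_dvd ⟨k, hu1⟩ (by rw [abs_lt]; omega)
        omega
      simp [this]
    have hVbcard : Vb.card = N * w := by
      rw [hVbdef, Finset.card_image_of_injOn hinjV, Finset.card_product, Finset.card_range,
        ← hNdef]
    have hVbne : Vb.Nonempty := by
      rw [hVbdef]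
      refine ⟨_, Finset.mem_image.mpr ⟨⟨(fun _ => (0:ℤ)), 0⟩, ?_, rfl⟩⟩
      exact Finset.mem_product.mpr ⟨hg0, Finset.mem_range.mpr hwpos⟩
    -- the tower of sumsets
    obtain ⟨T, hT0, hTsucc⟩ : ∃ T : ℕ → Finset (ZMod Q), T 0 = {(0 : ZMod Q)} ∧
        ∀ j, T (j+1) = T j + Vb + ({0,1} : Finset (ZMod Q)) :=
      ⟨fun j => Nat.rec {(0 : ZMod Q)} (fun _ Tj => Tj + Vb + ({0,1} : Finset (ZMod Q))) j,
        rfl, fun j => rfl⟩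
    have hTne : ∀ j, (T j).Nonempty := by
      intro j
      induction j with
      | zero => rw [hT0]; exact Finset.singleton_nonempty _
      | succ j ih =>
        rw [hTsucc]
        exact (ih.add hVbne).add ⟨0, Finset.mem_insert_self _ _⟩
    have hTcard : ∀ j, min Q (j * (N*w)) ≤ (T j).card := by
      intro j
      induction j with
      | zero => simp
      | succ j ih =>
        have hD := thmD Q Vb (T j) (hTne j) hVbne
        rw [hVbcard] at hD
        rw [hTsucc]
        have e1 : (j+1)*(N*w) = j*(N*w) + N*w := by ring
        omega
    -- membership invariant for T j
    have hTinv : ∀ j, ∀ z ∈ T j, ∃ x : Fin n → ℤ, (∀ i, 0 ≤ x i ∧ x i ≤ (j : ℤ) * M) ∧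
        ∃ t : ℤ, z = (t : ZMod Q) ∧ (Q:ℝ) * Lf x - j - 1 < (t:ℝ) ∧
          (t:ℝ) ≤ (Q:ℝ) * Lf x + j * w := by
      intro j
      induction j with
      | zero =>
        intro z hz
        rw [hT0, Finset.mem_singleton] at hz
        refine ⟨0, by intro i; simp, 0, by simp [hz], ?_, ?_⟩
        · have hL0 : Lf 0 = 0 := by rw [hLfdef]; simp
          rw [hL0]
          push_cast
          linarith
        · have hL0 : Lf 0 = 0 := by rw [hLfdef]; simp
          rw [hL0]
          push_cast
          linarith
      | succ j ih =>
        intro z hz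
        rw [hTsucc] at hz
        rw [Finset.mem_add] at hz
        obtain ⟨y, hy, d, hd, rfl⟩ := hz
        rw [Finset.mem_add] at hy
        obtain ⟨z', hz', v, hv, rfl⟩ := hy
        obtain ⟨x, hxc, t, hzt, hlow, hup⟩ := ih z' hz'
        rw [hVbdef, Finset.mem_image] at hv
        obtain ⟨⟨g, u⟩, hgu, rfl⟩ := hv
        have hgG : g ∈ G := (Finset.mem_product.mp hgu).1
        have huw : u < w := Finset.mem_range.mp (Finset.mem_product.mp hgu).2
        have hgub : ∀ i, 0 ≤ g i ∧ g i ≤ (M:ℤ) := (hmemG g).mp hgG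
        obtain ⟨d', hd', hd'0, hd'1⟩ : ∃ d' : ℤ, d = (d' : ZMod Q) ∧ 0 ≤ d' ∧ d' ≤ 1 := by
          rcases Finset.mem_insert.mp hd with h | h
          · exact ⟨0, by rw [h]; norm_num, le_refl _, by norm_num⟩
          · rw [Finset.mem_singleton] at h
            exact ⟨1, by rw [h]; norm_num, by norm_num, le_refl _⟩
        refine ⟨x + g, ?_, t + (c g + u) + d', ?_, ?_, ?_⟩
        · intro i
          have h1 := hxc i
          have h2 := hgub i
          simp only [Pi.add_apply]
          push_cast
          constructor
          · linarith [h1.1, h2.1]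
          · have := h1.2
            have := h2.2
            push_cast at this ⊢
            linarith
        · rw [hzt, hd']
          push_cast
          ring
        · rw [hLadd]
          have hcg := hc2 g
          have hu0 : (0:ℝ) ≤ u := by positivity
          have hd'R : (0:ℝ) ≤ (d':ℝ) := by exact_mod_cast hd'0
          have hexp : (Q:ℝ) * (Lf x + Lf g) = (Q:ℝ) * Lf x + (Q:ℝ) * Lf g := by ring
          push_cast
          rw [hexp]
          linarith
        · rw [hLadd]
          have hcg := hc1 g
          have huR : (u:ℝ) ≤ (w:ℝ) - 1 := by
            have : (u:ℝ) + 1 ≤ w := by exact_mod_cast huw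
            linarith
          have hd'R : (d' : ℝ) ≤ 1 := by exact_mod_cast hd'1
          have hexp : (Q:ℝ) * (Lf x + Lf g) = (Q:ℝ) * Lf x + (Q:ℝ) * Lf g := by ring
          push_cast
          rw [hexp]
          linarith
    -- T m covers everything
    have hQle : Q ≤ m * (N * w) := by
      have hR : (Q:ℝ) < (m:ℝ) * ((N:ℝ) * (w:ℝ)) := by
        have h1 : (m:ℝ) * ((N:ℝ) * (A * Q)) ≤ (m:ℝ) * ((N:ℝ) * w) := by
          apply mul_le_mul_of_nonneg_left _ (by positivity)
          exact mul_le_mul_of_nonneg_left hw1 (by positivity)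
        have h2 : (Q:ℝ) < (m:ℝ) * ((N:ℝ) * (A * Q)) := by
          have he : (m:ℝ) * ((N:ℝ) * (A * Q)) = ((m:ℝ) * ((N:ℝ) * A)) * Q := by ring
          rw [he]
          nlinarith [hm1, hQposR]
        linarith
      have hR2 : (Q:ℝ) < ((m * (N * w) : ℕ) : ℝ) := by push_cast; linarith
      exact_mod_cast hR2.le
    have hTuniv : T m = Finset.univ := by
      have h1 := hTcard m
      rw [min_eq_left hQle] at h1
      apply Finset.eq_univ_of_card
      have h2 : (T m).card ≤ Fintype.card (ZMod Q) := Finset.card_le_univ _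
      rw [ZMod.card] at h2
      rw [ZMod.card]
      omega
    have hNA1 : (N:ℝ) * A ≤ 1 := by
      have hVQ : N * w ≤ Q := by
        have h3 := Finset.card_le_univ Vb
        rwa [hVbcard, ZMod.card] at h3
      have hVQR : ((N:ℝ)) * w ≤ Q := by exact_mod_cast hVQ
      have h1 : (N:ℝ) * (A * Q) ≤ (N:ℝ) * w := mul_le_mul_of_nonneg_left hw1 (by positivity)
      nlinarith [hQposR]
    -- extraction of the solution
    set s : ℕ := (m * M) / 2 with hsdef
    have hs1 : 2 * s ≤ m * M := by omega
    have hs2 : m * M ≤ 2 * s + 1 := by omega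
    set δ : ℝ := ((m:ℝ)*w - m)/(2*Q) with hδdef
    set βt : ℝ := α + (s:ℝ) * W + δ with hβtdef
    clear_value δ βt
    have hz0 : ((⌊(Q:ℝ) * βt⌋ : ℤ) : ZMod Q) ∈ T m := by rw [hTuniv]; exact Finset.mem_univ _
    obtain ⟨x, hxc, t, hzt, hlow, hup⟩ := hTinv m _ hz0
    have hdvd : ((((⌊(Q:ℝ) * βt⌋ : ℤ) - t : ℤ)) : ZMod Q) = 0 := by
      push_cast
      rw [sub_eq_zero]
      exact_mod_cast hzt
    obtain ⟨k, hk⟩ := (ZMod.intCast_zmod_eq_zero_iff_dvd _ _).mp hdvd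
    have hkR : ((⌊(Q:ℝ) * βt⌋ : ℤ) : ℝ) - t = (Q:ℝ) * k := by exact_mod_cast hk
    have hf1 : ((⌊(Q:ℝ) * βt⌋ : ℤ) : ℝ) ≤ (Q:ℝ) * βt := Int.floor_le _
    have hf2 : (Q:ℝ) * βt - 1 < ((⌊(Q:ℝ) * βt⌋ : ℤ) : ℝ) := Int.sub_one_lt_floor _
    have hD1 : (Q:ℝ) * (βt - Lf x - k) < (m:ℝ)*w + 1 := by
      have he : (Q:ℝ) * (βt - Lf x - k) = ((Q:ℝ)*βt - Q*k) - Q * Lf x := by ring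
      rw [he]
      linarith
    have hD2 : (Q:ℝ) * (Lf x + k - βt) < (m:ℝ) + 1 := by
      have he : (Q:ℝ) * (Lf x + k - βt) = (Q:ℝ) * Lf x - ((Q:ℝ)*βt - Q*k) := by ring
      rw [he]
      linarith
    have hQ4 : (0:ℝ) < 2*Q := by linarith
    refine ⟨(fun i => x i - (s:ℤ)), ?_, ?_⟩
    · have hLx' : Lf (fun i => x i - ((s:ℕ):ℤ)) = Lf x - (s:ℝ) * W := by
        rw [hLshift x ((s:ℕ):ℤ)]
        push_cast
        ring
      have hgoal_eq : (∑ i, ω i * (((x i - ((s:ℕ):ℤ)) : ℤ) : ℝ)) = Lf (fun i => x i - ((s:ℕ):ℤ)) := by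
        rw [hLfdef]
      rw [hgoal_eq, hLx']
      have hle := distToInt_le_abs_sub_int (Lf x - (s:ℝ)*W - α) (-k)
      refine le_trans hle ?_
      have hid : Lf x - (s:ℝ)*W - α - ((-k : ℤ):ℝ) = (Lf x + k - βt) + δ := by
        rw [hβtdef]
        push_cast
        ring
      rw [hid]
      have habs : |(Lf x + k - βt) + δ| ≤ ((m:ℝ)*w + m + 2)/(2*Q) := by
        rw [abs_le, hδdef]
        constructor
        · have he1 : (Lf x + ↑k - βt) + ((m:ℝ)*w - m)/(2*Q) + ((m:ℝ)*w + m + 2)/(2*Q)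
              = ((Q:ℝ)*(Lf x + ↑k - βt) + ((m:ℝ)*w + 1))/Q := by
            field_simp
            ring
          have he1' : (0:ℝ) ≤ (Lf x + ↑k - βt) + ((m:ℝ)*w - m)/(2*Q) + ((m:ℝ)*w + m + 2)/(2*Q) := by
            rw [he1]
            apply div_nonneg _ hQposR.le
            linarith [hD1]
          linarith
        · rw [← sub_nonneg]
          have he2 : ((m:ℝ)*w + m + 2)/(2*Q) - ((Lf x + k - βt) + ((m:ℝ)*w - m)/(2*Q))
              = (((m:ℝ) + 1) - (Q:ℝ) * (Lf x + k - βt))/Q := by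
            field_simp
            ring
          rw [he2]
          apply div_nonneg _ (le_of_lt hQposR)
          linarith
      refine le_trans habs ?_
      have hmw : (m:ℝ)*w ≤ (m:ℝ)*(A*Q+1) := mul_le_mul_of_nonneg_left hw2 (by positivity)
      have hstep1 : ((m:ℝ)*w + m + 2)/(2*Q) ≤ (m:ℝ)*A/2 + ((m:ℝ)+1)/Q := by
        rw [div_le_iff₀ hQ4]
        have he3 : ((m:ℝ)*A/2 + ((m:ℝ)+1)/Q) * (2*Q) = (m:ℝ)*A*Q + 2*((m:ℝ)+1) := by
          field_simp
        rw [he3]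
        nlinarith [hmw]
      have hstep2 : ((m:ℝ)+1)/Q ≤ ε*A/2 := hQm
      have hfin : (m:ℝ)*A/2 + ε*A/2 = (1 / 2) * ((X ^ n)⁻¹ * A⁻¹ + 1) * A := by
        rw [hεdef]
        ring
      linarith
    · intro i
      have h1 := hxc i
      have hb : |((x i - ((s:ℕ):ℤ) : ℤ) : ℝ)| ≤ ((m:ℝ)*M + 1)/2 := by
        have hxi0 : (0:ℤ) ≤ x i := h1.1
        have hxim : x i ≤ ((m:ℕ):ℤ) * M := h1.2
        have hxi0R : (0:ℝ) ≤ ((x i : ℤ):ℝ) := by exact_mod_cast hxi0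
        have hximR : ((x i : ℤ):ℝ) ≤ (m:ℝ)*M := by exact_mod_cast hxim
        have hsR : 2*(s:ℝ) ≤ (m:ℝ)*M := by exact_mod_cast hs1
        have hsR2 : (m:ℝ)*M ≤ 2*(s:ℝ) + 1 := by exact_mod_cast hs2
        rw [abs_le]
        constructor
        · push_cast
          linarith
        · push_cast
          linarith
      have hNA1' : 1 ≤ ((N:ℝ)*A)⁻¹ := one_le_inv_iff₀.mpr ⟨hNposR, hNA1⟩
      have hpow : ((M:ℝ)+1)*X^n ≤ X*(N:ℝ) := by
        obtain ⟨p, rfl⟩ : ∃ p, n = p + 1 := ⟨n - 1, by omega⟩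
        rw [← hNval]
        have hxp : X^p ≤ ((M:ℝ)+1)^p := pow_le_pow_left₀ hX.le hXM.le p
        have hMp : (0:ℝ) < (M:ℝ)+1 := by positivity
        calc ((M:ℝ)+1)*X^(p+1) = (((M:ℝ)+1)*X)*X^p := by ring
          _ ≤ (((M:ℝ)+1)*X)*((M:ℝ)+1)^p := by
              apply mul_le_mul_of_nonneg_left hxp (by positivity)
          _ = X*((M:ℝ)+1)^(p+1) := by ring
      have hp2 : ((M:ℝ)+1) * (X^n * A) ≤ X * ((N:ℝ) * A) := by
        calc ((M:ℝ)+1)*(X^n*A) = (((M:ℝ)+1)*X^n)*A := by ring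
          _ ≤ (X*(N:ℝ))*A := mul_le_mul_of_nonneg_right hpow hA.le
          _ = X*((N:ℝ)*A) := by ring
      have hp3 : ((M:ℝ)+1) * ((N:ℝ)*A)⁻¹ ≤ X * (X^n * A)⁻¹ := by
        rw [← div_eq_mul_inv, ← div_eq_mul_inv]
        rw [div_le_div_iff₀ (by positivity) (by positivity)]
        linarith [hp2]
      have hp1 : (m:ℝ)*M ≤ ((N:ℝ)*A)⁻¹*M + M := by
        have hM0 : (0:ℝ) ≤ M := by positivity
        nlinarith [hm2]
      have hkey : (m:ℝ)*M + 1 ≤ ((X ^ n)⁻¹ * A⁻¹ + 1) * X := by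
        calc (m:ℝ)*M + 1 ≤ ((N:ℝ)*A)⁻¹*M + M + 1 := by linarith
          _ ≤ ((N:ℝ)*A)⁻¹*M + X + ((N:ℝ)*A)⁻¹ := by linarith
          _ = ((M:ℝ)+1) * ((N:ℝ)*A)⁻¹ + X := by ring
          _ ≤ X * (X^n * A)⁻¹ + X := by linarith
          _ = ((X ^ n)⁻¹ * A⁻¹ + 1) * X := by rw [mul_inv]; ring
      calc |(((x i - ((s:ℕ):ℤ)) : ℤ):ℝ)| ≤ ((m:ℝ)*M + 1)/2 := hb
        _ ≤ (1/2) * ((X ^ n)⁻¹ * A⁻¹ + 1) * X := by linarith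
end

section
/- Let k', k'' ∈ ℤ³ be linearly independent, let ν > 0, and let ω ∈ ℝ³ satisfy ω·k' = ω·k'' = 0 and |ω| ≥ ν. Then every k ∈ ℤ³ not lying in the real span of {k', k''} satisfies |ω·k| ≥ ν/|k'×k''|, where × denotes the cross product in ℝ³. Consequently, if ω = (ω',1) with ω' ∈ ℝ² and k ∈ (ℤ²∖{0})×ℤ is not in the real span of {k', k''}, then every point ω'' on the resonance line Γ_k satisfies |ω'' − ω'| ≥ ν/(|k'×k''| |k|). -/
open Real Set

/-- Euclidean norm of an integer vector `k ∈ ℤ³`. -/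
noncomputable def knorm (k : Fin 3 → ℤ) : ℝ :=
  Real.sqrt ((k 0 : ℝ) ^ 2 + (k 1 : ℝ) ^ 2 + (k 2 : ℝ) ^ 2)

/-- `k·(ω,1)` for `k ∈ ℤ³` and `ω ∈ ℝ²`. -/
noncomputable def kdot (k : Fin 3 → ℤ) (ω : ℝ × ℝ) : ℝ :=
  (k 0 : ℝ) * ω.1 + (k 1 : ℝ) * ω.2 + (k 2 : ℝ)

/-- Membership in `(ℤ²∖{0})×ℤ`: the first two components do not both vanish. -/
def isRes (k : Fin 3 → ℤ) : Prop := ¬ (k 0 = 0 ∧ k 1 = 0)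

/-- The resonance line `Γ_k = {ω ∈ ℝ² : k·(ω,1) = 0}`. -/
def resLine (k : Fin 3 → ℤ) : Set (ℝ × ℝ) := {ω | kdot k ω = 0}

/-- Euclidean distance in `ℝ²`. -/
noncomputable def dist2 (a b : ℝ × ℝ) : ℝ :=
  Real.sqrt ((a.1 - b.1) ^ 2 + (a.2 - b.2) ^ 2)

/-- Dot product in `ℝ³`. -/
noncomputable def dot3 (v w : Fin 3 → ℝ) : ℝ := v 0 * w 0 + v 1 * w 1 + v 2 * w 2

/-- Euclidean norm in `ℝ³`. -/
noncomputable def norm3 (v : Fin 3 → ℝ) : ℝ := Real.sqrt (v 0 ^ 2 + v 1 ^ 2 + v 2 ^ 2)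

/-- Cross product in `ℝ³`. -/
noncomputable def cross3 (a b : Fin 3 → ℝ) : Fin 3 → ℝ :=
  ![a 1 * b 2 - a 2 * b 1, a 2 * b 0 - a 0 * b 2, a 0 * b 1 - a 1 * b 0]

/-- Cast of an integer vector to `ℝ³`. -/
noncomputable def castZ (k : Fin 3 → ℤ) : Fin 3 → ℝ := fun i => (k i : ℝ)

/-- If all three cross-product components of `u, v` vanish and `u ≠ 0`, then `v` is a
multiple of `u`. -/
lemma cross_zero_imp (u v : Fin 3 → ℝ)
    (e0 : u 1 * v 2 - u 2 * v 1 = 0)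
    (e1 : u 2 * v 0 - u 0 * v 2 = 0)
    (e2 : u 0 * v 1 - u 1 * v 0 = 0)
    (hu : u 0 ≠ 0 ∨ u 1 ≠ 0 ∨ u 2 ≠ 0) :
    ∃ c : ℝ, ∀ i, v i = c * u i := by
  rcases hu with h | h | h
  · refine ⟨v 0 / u 0, fun i => ?_⟩
    fin_cases i <;> simp <;> field_simp <;> linarith
  · refine ⟨v 1 / u 1, fun i => ?_⟩
    fin_cases i <;> simp <;> field_simp <;> linarith
  · refine ⟨v 2 / u 2, fun i => ?_⟩
    fin_cases i <;> simp <;> field_simp <;> linarith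

/-- If the triple product `det(a,b,v)` vanishes and `a × b ≠ 0`, then `v` is a linear
combination of `a` and `b` (Cramer's rule). -/
lemma cramer3 (a b v : Fin 3 → ℝ)
    (hX : (a 1 * b 2 - a 2 * b 1) * v 0 + (a 2 * b 0 - a 0 * b 2) * v 1
        + (a 0 * b 1 - a 1 * b 0) * v 2 = 0)
    (hne : a 1 * b 2 - a 2 * b 1 ≠ 0 ∨ a 2 * b 0 - a 0 * b 2 ≠ 0 ∨ a 0 * b 1 - a 1 * b 0 ≠ 0) :
    ∃ α β : ℝ, ∀ i, v i = α * a i + β * b i := by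
  rcases hne with h | h | h
  · refine ⟨(v 1 * b 2 - v 2 * b 1) / (a 1 * b 2 - a 2 * b 1),
      (a 1 * v 2 - a 2 * v 1) / (a 1 * b 2 - a 2 * b 1), fun i => ?_⟩
    have h' : b 2 * a 1 - b 1 * a 2 ≠ 0 := by
      rw [show b 2 * a 1 - b 1 * a 2 = a 1 * b 2 - a 2 * b 1 by ring]; exact h
    fin_cases i <;> simp <;> field_simp <;> nlinarith [hX, sq_nonneg (a 1)]
  · refine ⟨(v 2 * b 0 - v 0 * b 2) / (a 2 * b 0 - a 0 * b 2),
      (a 2 * v 0 - a 0 * v 2) / (a 2 * b 0 - a 0 * b 2), fun i => ?_⟩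
    have h' : b 0 * a 2 - b 2 * a 0 ≠ 0 := by
      rw [show b 0 * a 2 - b 2 * a 0 = a 2 * b 0 - a 0 * b 2 by ring]; exact h
    fin_cases i <;> simp <;> field_simp <;> nlinarith [hX]
  · refine ⟨(v 0 * b 1 - v 1 * b 0) / (a 0 * b 1 - a 1 * b 0),
      (a 0 * v 1 - a 1 * v 0) / (a 0 * b 1 - a 1 * b 0), fun i => ?_⟩
    have h' : b 1 * a 0 - b 0 * a 1 ≠ 0 := by
      rw [show b 1 * a 0 - b 0 * a 1 = a 0 * b 1 - a 1 * b 0 by ring]; exact h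
    fin_cases i <;> simp <;> field_simp <;> nlinarith [hX]

set_option maxHeartbeats 1600000 in
/-- If `ω ∈ ℝ³` is orthogonal to the independent integer vectors `k', k''` and `|ω| ≥ ν`, then
`|ω·k| ≥ ν/|k'×k''|` for every integer `k` outside the real span of `{k', k''}`; consequently,
for `ω = (ω',1)` every point of the resonance line `Γ_k` is at distance at least
`ν/(|k'×k''| |k|)` from `ω'`. -/
theorem lattice_separation (k' k'' : Fin 3 → ℤ)
    (hind : LinearIndependent ℝ ![castZ k', castZ k''])
    (ν : ℝ) (hν : 0 < ν) (ω : Fin 3 → ℝ)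
    (h1 : dot3 ω (castZ k') = 0) (h2 : dot3 ω (castZ k'') = 0)
    (h3 : ν ≤ norm3 ω) :
    (∀ k : Fin 3 → ℤ,
      castZ k ∉ Submodule.span ℝ ({castZ k', castZ k''} : Set (Fin 3 → ℝ)) →
      ν / norm3 (cross3 (castZ k') (castZ k'')) ≤ |dot3 ω (castZ k)|) ∧
    (∀ ω' : ℝ × ℝ, ω = ![ω'.1, ω'.2, (1 : ℝ)] →
      ∀ k : Fin 3 → ℤ, isRes k →
        castZ k ∉ Submodule.span ℝ ({castZ k', castZ k''} : Set (Fin 3 → ℝ)) →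
        ∀ ω'' ∈ resLine k,
          ν / (norm3 (cross3 (castZ k') (castZ k'')) * knorm k) ≤ dist2 ω'' ω') := by
  set a : Fin 3 → ℝ := castZ k' with ha
  set b : Fin 3 → ℝ := castZ k'' with hb
  set X : Fin 3 → ℝ := cross3 a b with hXdef
  have hX0 : X 0 = a 1 * b 2 - a 2 * b 1 := rfl
  have hX1 : X 1 = a 2 * b 0 - a 0 * b 2 := rfl
  have hX2 : X 2 = a 0 * b 1 - a 1 * b 0 := rfl
  -- from linear independence: b ≠ 0 and no multiple of b equals a
  have hfin := linearIndependent_fin2.mp hind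
  obtain ⟨hbne, hnm⟩ := hfin
  -- X ≠ 0 (componentwise)
  have hXne : X 0 ≠ 0 ∨ X 1 ≠ 0 ∨ X 2 ≠ 0 := by
    by_contra hcon
    push_neg at hcon
    obtain ⟨c0, c1, c2⟩ := hcon
    have hbcomp : b 0 ≠ 0 ∨ b 1 ≠ 0 ∨ b 2 ≠ 0 := by
      by_contra hb0
      push_neg at hb0
      exact hbne (funext fun i => by fin_cases i <;> simp [hb0.1, hb0.2.1, hb0.2.2])
    obtain ⟨c, hc⟩ := cross_zero_imp b a
      (by rw [hX0] at c0; linarith) (by rw [hX1] at c1; linarith)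
      (by rw [hX2] at c2; linarith) hbcomp
    exact hnm c (funext fun i => by rw [Pi.smul_apply, smul_eq_mul]; exact (hc i).symm)
  -- norm of X is positive
  have hXsum : 0 < X 0 ^ 2 + X 1 ^ 2 + X 2 ^ 2 := by
    rcases hXne with h | h | h <;> positivity
  have hXn : 0 < norm3 X := Real.sqrt_pos.mpr hXsum
  -- ω is parallel to X
  have hωa : ω 0 * a 0 + ω 1 * a 1 + ω 2 * a 2 = 0 := h1
  have hωb : ω 0 * b 0 + ω 1 * b 1 + ω 2 * b 2 = 0 := h2
  obtain ⟨c, hc⟩ : ∃ c : ℝ, ∀ i, ω i = c * X i := by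
    apply cross_zero_imp X ω _ _ _ hXne
    · rw [hX1, hX2]; linear_combination b 0 * hωa - a 0 * hωb
    · rw [hX2, hX0]; linear_combination b 1 * hωa - a 1 * hωb
    · rw [hX0, hX1]; linear_combination b 2 * hωa - a 2 * hωb
  -- |ω| = |c| |X|
  have hnorm : norm3 ω = |c| * norm3 X := by
    have : ω 0 ^ 2 + ω 1 ^ 2 + ω 2 ^ 2 = c ^ 2 * (X 0 ^ 2 + X 1 ^ 2 + X 2 ^ 2) := by
      rw [hc 0, hc 1, hc 2]; ring
    rw [norm3, this, Real.sqrt_mul (sq_nonneg c), Real.sqrt_sq_eq_abs, norm3]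
  have hcabs : ν / norm3 X ≤ |c| := by
    rw [div_le_iff₀ hXn]
    calc ν ≤ norm3 ω := h3
    _ = |c| * norm3 X := hnorm
  -- main estimate
  have key : ∀ k : Fin 3 → ℤ,
      castZ k ∉ Submodule.span ℝ ({a, b} : Set (Fin 3 → ℝ)) →
      ν / norm3 X ≤ |dot3 ω (castZ k)| := by
    intro k hk
    set v : Fin 3 → ℝ := castZ k with hv
    -- the triple product is a nonzero integer
    set m : ℤ := (k' 1 * k'' 2 - k' 2 * k'' 1) * k 0 + (k' 2 * k'' 0 - k' 0 * k'' 2) * k 1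
        + (k' 0 * k'' 1 - k' 1 * k'' 0) * k 2 with hm
    have hXv : X 0 * v 0 + X 1 * v 1 + X 2 * v 2 = (m : ℝ) := by
      rw [hX0, hX1, hX2]
      simp only [ha, hb, hv, castZ, hm]
      push_cast
      ring
    have hmne : m ≠ 0 := by
      intro hm0
      apply hk
      obtain ⟨α, β, hαβ⟩ := cramer3 a b v
        (by rw [← hX0, ← hX1, ← hX2, hXv, hm0]; norm_num)
        (by rwa [← hX0, ← hX1, ← hX2])
      exact Submodule.mem_span_pair.mpr ⟨α, β, funext fun i => by
        rw [Pi.add_apply, Pi.smul_apply, Pi.smul_apply, smul_eq_mul, smul_eq_mul]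
        exact (hαβ i).symm⟩
    have hm1 : (1 : ℝ) ≤ |(m : ℝ)| := by
      rw [← Int.cast_abs]
      exact_mod_cast Int.one_le_abs hmne
    have hdot : dot3 ω v = c * (m : ℝ) := by
      rw [dot3, hc 0, hc 1, hc 2, ← hXv]; ring
    rw [hdot, abs_mul]
    calc ν / norm3 X ≤ |c| := hcabs
    _ = |c| * 1 := (mul_one _).symm
    _ ≤ |c| * |(m : ℝ)| := by
        exact mul_le_mul_of_nonneg_left hm1 (abs_nonneg c)
  refine ⟨key, ?_⟩
  intro ω' hω k hres hk ω'' hline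
  have hkd : kdot k ω'' = 0 := hline
  -- knorm k > 0
  have hksum : 0 < (k 0 : ℝ) ^ 2 + (k 1 : ℝ) ^ 2 + (k 2 : ℝ) ^ 2 := by
    rw [isRes, not_and_or] at hres
    rcases hres with h | h
    · have : (k 0 : ℝ) ≠ 0 := Int.cast_ne_zero.mpr h
      positivity
    · have : (k 1 : ℝ) ≠ 0 := Int.cast_ne_zero.mpr h
      positivity
  have hK : 0 < knorm k := Real.sqrt_pos.mpr hksum
  -- dot3 ω (castZ k) = kdot k ω'
  have hω0 : ω 0 = ω'.1 := by rw [hω]; rfl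
  have hω1 : ω 1 = ω'.2 := by rw [hω]; rfl
  have hω2 : ω 2 = 1 := by rw [hω]; rfl
  have hdoteq : dot3 ω (castZ k) = kdot k ω' := by
    simp only [dot3, kdot, castZ, hω0, hω1, hω2]; ring
  -- distance bound
  set d : ℝ := dist2 ω'' ω' with hd
  have hd0 : 0 ≤ d := Real.sqrt_nonneg _
  have hdsq : d ^ 2 = (ω''.1 - ω'.1) ^ 2 + (ω''.2 - ω'.2) ^ 2 :=
    Real.sq_sqrt (by positivity)
  have hKsq : knorm k ^ 2 = (k 0 : ℝ) ^ 2 + (k 1 : ℝ) ^ 2 + (k 2 : ℝ) ^ 2 :=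
    Real.sq_sqrt (by positivity)
  have hCS : |dot3 ω (castZ k)| ≤ knorm k * d := by
    have hsq : (dot3 ω (castZ k)) ^ 2 ≤ (knorm k * d) ^ 2 := by
      rw [hdoteq, mul_pow, hdsq, hKsq, kdot]
      have hexp : (k 0 : ℝ) * ω'.1 + (k 1 : ℝ) * ω'.2 + (k 2 : ℝ)
          = (k 0 : ℝ) * (ω'.1 - ω''.1) + (k 1 : ℝ) * (ω'.2 - ω''.2) := by
        rw [kdot] at hkd; linarith
      rw [hexp]
      nlinarith [sq_nonneg ((k 0 : ℝ) * (ω'.2 - ω''.2) - (k 1 : ℝ) * (ω'.1 - ω''.1)),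
        mul_nonneg (sq_nonneg (k 2 : ℝ))
          (add_nonneg (sq_nonneg (ω'.1 - ω''.1)) (sq_nonneg (ω'.2 - ω''.2)))]
    calc |dot3 ω (castZ k)| = Real.sqrt ((dot3 ω (castZ k)) ^ 2) :=
        (Real.sqrt_sq_eq_abs _).symm
    _ ≤ Real.sqrt ((knorm k * d) ^ 2) := Real.sqrt_le_sqrt hsq
    _ = knorm k * d := Real.sqrt_sq (by positivity)
  have hkey := key k hk
  rw [← div_div, div_le_iff₀ hK]
  calc ν / norm3 X ≤ |dot3 ω (castZ k)| := hkey
  _ ≤ knorm k * d := hCS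
  _ = d * knorm k := mul_comm _ _
end

section
/- Let n ≥ 1, let U ⊂ ℝⁿ be open, let H₀ : U → ℝ be C², and define 𝓗₀ : U×ℝ → ℝ by 𝓗₀(I,E) = exp(H₀(I)+E). Then at every point (I,E) ∈ U×ℝ the determinant of the full Hessian of 𝓗₀ (with respect to the n+1 variables (I,E)) equals 𝓗₀(I,E)^{n+1} · det(∂²H₀(I)). In particular, if the Hessian ∂²H₀(I) is positive definite (or merely invertible) for every I ∈ U, then the Hessian of 𝓗₀ is nondegenerate at every point of U×ℝ. -/
/-- The Hessian matrix of `f : ℝⁿ → ℝ` at `x`. -/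
noncomputable def hessn (n : ℕ) (f : (Fin n → ℝ) → ℝ) (x : Fin n → ℝ) :
    Matrix (Fin n) (Fin n) ℝ :=
  Matrix.of fun i j =>
    fderiv ℝ (fun y => fderiv ℝ f y (Pi.single j 1)) x (Pi.single i 1)

/-- The coordinate directions of `ℝⁿ × ℝ`. -/
noncomputable def dirsP (n : ℕ) : (Fin n ⊕ Fin 1) → (Fin n → ℝ) × ℝ :=
  Sum.elim (fun i => (Pi.single i 1, 0)) (fun _ => (0, 1))

/-- The full `(n+1)×(n+1)` Hessian matrix of `f : ℝⁿ × ℝ → ℝ` at `x` in the variables `(I,E)`. -/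
noncomputable def hessP (n : ℕ) (f : (Fin n → ℝ) × ℝ → ℝ) (x : (Fin n → ℝ) × ℝ) :
    Matrix (Fin n ⊕ Fin 1) (Fin n ⊕ Fin 1) ℝ :=
  Matrix.of fun a b =>
    fderiv ℝ (fun y => fderiv ℝ f y (dirsP n b)) x (dirsP n a)

/-- For `𝓗₀(I,E) = exp(H₀(I)+E)`, the determinant of the full Hessian of `𝓗₀` equals
`𝓗₀(I,E)^{n+1} · det ∂²H₀(I)` at every point of `U × ℝ`; in particular `𝓗₀` has nondegenerate
Hessian whenever `∂²H₀` is invertible on `U`. -/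
theorem exp_hessian_det (n : ℕ) (hn : 1 ≤ n)
    (U : Set (Fin n → ℝ)) (hU : IsOpen U)
    (H₀ : (Fin n → ℝ) → ℝ) (hH : ContDiffOn ℝ 2 H₀ U) :
    (∀ I ∈ U, ∀ E : ℝ,
      (hessP n (fun p => Real.exp (H₀ p.1 + p.2)) (I, E)).det =
        Real.exp (H₀ I + E) ^ (n + 1) * (hessn n H₀ I).det) ∧
    ((∀ I ∈ U, (hessn n H₀ I).det ≠ 0) →
      ∀ I ∈ U, ∀ E : ℝ,
        (hessP n (fun p => Real.exp (H₀ p.1 + p.2)) (I, E)).det ≠ 0) := by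
  have key : ∀ I ∈ U, ∀ E : ℝ,
      (hessP n (fun p => Real.exp (H₀ p.1 + p.2)) (I, E)).det =
        Real.exp (H₀ I + E) ^ (n + 1) * (hessn n H₀ I).det := by
    intro I hI E
    have hG1 : ContDiffOn ℝ 1 (fderiv ℝ H₀) U :=
      hH.fderiv_of_isOpen hU (by norm_num)
    -- first derivative formula, valid on U × ℝ
    have hfder : ∀ y : (Fin n → ℝ) × ℝ, y.1 ∈ U → ∀ v : (Fin n → ℝ) × ℝ,
        fderiv ℝ (fun p : (Fin n → ℝ) × ℝ => Real.exp (H₀ p.1 + p.2)) y v =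
          Real.exp (H₀ y.1 + y.2) * (fderiv ℝ H₀ y.1 v.1 + v.2) := by
      intro y hy v
      have hdy : DifferentiableAt ℝ H₀ y.1 :=
        (hH.contDiffAt (hU.mem_nhds hy)).differentiableAt (by norm_num)
      have h1 : HasFDerivAt (fun p : (Fin n → ℝ) × ℝ => H₀ p.1 + p.2)
          ((fderiv ℝ H₀ y.1).comp (ContinuousLinearMap.fst ℝ _ _) +
            ContinuousLinearMap.snd ℝ _ _) y :=
        (hdy.hasFDerivAt.comp y hasFDerivAt_fst).add hasFDerivAt_snd
      have h2 := h1.exp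
      rw [h2.fderiv]
      simp
      ring
    -- second derivative entries
    have hdy : DifferentiableAt ℝ H₀ I :=
      (hH.contDiffAt (hU.mem_nhds hI)).differentiableAt (by norm_num)
    have hGd : DifferentiableAt ℝ (fderiv ℝ H₀) I :=
      (hG1.contDiffAt (hU.mem_nhds hI)).differentiableAt (by norm_num)
    have hentry : ∀ a b, hessP n (fun p => Real.exp (H₀ p.1 + p.2)) (I, E) a b =
        Real.exp (H₀ I + E) *
          (fderiv ℝ (fun x => fderiv ℝ H₀ x (dirsP n b).1) I (dirsP n a).1 +
            (fderiv ℝ H₀ I (dirsP n b).1 + (dirsP n b).2) *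
              (fderiv ℝ H₀ I (dirsP n a).1 + (dirsP n a).2)) := by
      intro a b
      have hev : (fun y => fderiv ℝ (fun p : (Fin n → ℝ) × ℝ => Real.exp (H₀ p.1 + p.2)) y
            (dirsP n b))
          =ᶠ[nhds ((I, E) : (Fin n → ℝ) × ℝ)]
          fun y => Real.exp (H₀ y.1 + y.2) *
            (fderiv ℝ H₀ y.1 (dirsP n b).1 + (dirsP n b).2) := by
        filter_upwards [(hU.preimage continuous_fst).mem_nhds
          (show ((I, E) : (Fin n → ℝ) × ℝ).1 ∈ U from hI)] with y hy
        exact hfder y hy (dirsP n b)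
      have hrw : hessP n (fun p => Real.exp (H₀ p.1 + p.2)) (I, E) a b =
          fderiv ℝ (fun y : (Fin n → ℝ) × ℝ => Real.exp (H₀ y.1 + y.2) *
            (fderiv ℝ H₀ y.1 (dirsP n b).1 + (dirsP n b).2)) (I, E) (dirsP n a) := by
        show fderiv ℝ _ (I, E) (dirsP n a) = _
        rw [hev.fderiv_eq]
      rw [hrw]
      have h1 : HasFDerivAt (fun p : (Fin n → ℝ) × ℝ => Real.exp (H₀ p.1 + p.2))
          (Real.exp (H₀ I + E) • ((fderiv ℝ H₀ I).comp (ContinuousLinearMap.fst ℝ _ _) +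
            ContinuousLinearMap.snd ℝ _ _)) (I, E) :=
        ((hdy.hasFDerivAt.comp (I, E) hasFDerivAt_fst).add hasFDerivAt_snd).exp
      have hEv : DifferentiableAt ℝ (fun x => fderiv ℝ H₀ x (dirsP n b).1) I :=
        ((ContinuousLinearMap.apply ℝ ℝ (dirsP n b).1).differentiableAt).comp I hGd
      have h2 : HasFDerivAt (fun y : (Fin n → ℝ) × ℝ =>
            fderiv ℝ H₀ y.1 (dirsP n b).1 + (dirsP n b).2)
          ((fderiv ℝ (fun x => fderiv ℝ H₀ x (dirsP n b).1) I).comp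
            (ContinuousLinearMap.fst ℝ _ _)) (I, E) :=
        by have := (hEv.hasFDerivAt.comp (I, E) (hasFDerivAt_fst (𝕜 := ℝ) (p := ((I, E) : (Fin n → ℝ) × ℝ)))).add_const (dirsP n b).2; exact this
      have h3 : HasFDerivAt (fun y : (Fin n → ℝ) × ℝ => Real.exp (H₀ y.1 + y.2) *
          (fderiv ℝ H₀ y.1 (dirsP n b).1 + (dirsP n b).2)) _ (I, E) := h1.mul h2
      rw [h3.fderiv]
      simp
      ring
    -- matrix identity
    set c : ℝ := Real.exp (H₀ I + E) with hc
    set g : Fin n → ℝ := fun i => fderiv ℝ H₀ I (Pi.single i 1) with hg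
    have hM : hessP n (fun p => Real.exp (H₀ p.1 + p.2)) (I, E) =
        c • ((Matrix.fromBlocks (1 : Matrix (Fin n) (Fin n) ℝ)
              (Matrix.of fun i (_ : Fin 1) => g i) 0 1) *
            (Matrix.fromBlocks (hessn n H₀ I) 0
              (Matrix.of fun (_ : Fin 1) j => g j) 1)) := by
      ext a b
      rw [show hessP n (fun p => Real.exp (H₀ p.1 + p.2)) (I, E) a b = _ from hentry a b]
      have hzero : (fun x => fderiv ℝ H₀ x (0 : Fin n → ℝ)) = fun _ => (0 : ℝ) := by
        funext x; simp
      rcases a with i | i <;> rcases b with j | j <;>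
        simp [Matrix.fromBlocks_multiply, Matrix.mul_apply, dirsP, hessn, hzero,
          Matrix.one_apply, Fin.sum_univ_one, mul_comm, eq_iff_true_of_subsingleton, hg] <;> ring
    rw [hM, Matrix.det_smul, Matrix.det_mul, Matrix.det_fromBlocks_zero₂₁,
      Matrix.det_fromBlocks_zero₁₂]
    simp [hc]
  refine ⟨key, fun hdet I hI E => ?_⟩
  rw [key I hI E]
  exact mul_ne_zero (pow_ne_zero _ (Real.exp_ne_zero _)) (hdet I hI)
end

section
/- Let K > 0 and let u : ℝⁿ → ℝ be ℤⁿ-periodic and K-semi-concave, i.e. the function x ↦ u(x) − K|x|²/2 is concave on ℝⁿ. Then u is Lipschitz with Lipschitz constant K√n. -/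
/-- The integer vector `m ∈ ℤⁿ` viewed as a point of Euclidean space. -/
noncomputable def intVec (n : ℕ) (m : Fin n → ℤ) : EuclideanSpace ℝ (Fin n) :=
  WithLp.toLp 2 (fun i => (m i : ℝ))

section aux

variable {n : ℕ} {K : ℝ} {u : EuclideanSpace ℝ (Fin n) → ℝ}

lemma key_step (hK : 0 < K)
    (hper : ∀ (x : EuclideanSpace ℝ (Fin n)) (m : Fin n → ℤ), u (x + intVec n m) = u x)
    (hsc : ConcaveOn ℝ Set.univ
      (fun x : EuclideanSpace ℝ (Fin n) => u x - K * ‖x‖ ^ 2 / 2))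
    (a : EuclideanSpace ℝ (Fin n)) (i : Fin n) (δ : ℝ) (h0 : 0 ≤ δ) (h1 : δ ≤ 1) :
    |u (a + δ • EuclideanSpace.single i (1:ℝ)) - u a| ≤ K * δ := by
  set e : EuclideanSpace ℝ (Fin n) := EuclideanSpace.single i (1:ℝ) with he_def
  have he : ‖e‖ = 1 := by simp [he_def]
  have hnorm : ∀ t : ℝ, ‖a + t • e‖ ^ 2
      = ‖a‖ ^ 2 + 2 * t * (inner ℝ a e : ℝ) + t ^ 2 := by
    intro t
    rw [norm_add_sq_real, real_inner_smul_right, norm_smul]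
    simp [he]
    ring
  have hintvec : ∀ z : ℤ, (z : ℝ) • e = intVec n (fun j => if j = i then z else 0) := by
    intro z
    ext j
    simp [he_def, intVec, EuclideanSpace.single_apply, mul_ite]
  have hu1 : u (a + (1:ℝ) • e) = u a := by
    have h := hper a (fun j => if j = i then 1 else 0)
    rw [← hintvec 1] at h
    simpa using h
  have hpt : a + δ • e + ((-1 : ℤ) : ℝ) • e = a + (δ - 1) • e := by
    push_cast
    module
  have hu2 : u (a + (δ - 1) • e) = u (a + δ • e) := by
    have h := hper (a + δ • e) (fun j => if j = i then -1 else 0)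
    rw [← hintvec (-1), hpt] at h
    exact h
  have hA : (1 - δ) • a + δ • (a + (1:ℝ) • e) = a + δ • e := by module
  have hB : δ • (a + (δ - 1) • e) + (1 - δ) • (a + δ • e) = a := by module
  have hc1 := hsc.2 (Set.mem_univ a) (Set.mem_univ (a + (1:ℝ) • e))
    (by linarith : (0:ℝ) ≤ 1 - δ) h0 (by ring)
  rw [hA] at hc1
  have hc2 := hsc.2 (Set.mem_univ (a + (δ - 1) • e)) (Set.mem_univ (a + δ • e))
    h0 (by linarith : (0:ℝ) ≤ 1 - δ) (by ring)
  rw [hB] at hc2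
  simp only [smul_eq_mul] at hc1 hc2
  rw [hnorm δ, hnorm 1, hu1] at hc1
  rw [hnorm δ, hnorm (δ - 1), hu2] at hc2
  rw [abs_le]
  constructor <;> nlinarith [hc1, hc2, mul_nonneg (mul_nonneg hK.le h0) (by linarith : (0:ℝ) ≤ 1 - δ)]

lemma key_step' (hK : 0 < K)
    (hper : ∀ (x : EuclideanSpace ℝ (Fin n)) (m : Fin n → ℤ), u (x + intVec n m) = u x)
    (hsc : ConcaveOn ℝ Set.univ
      (fun x : EuclideanSpace ℝ (Fin n) => u x - K * ‖x‖ ^ 2 / 2))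
    (a : EuclideanSpace ℝ (Fin n)) (i : Fin n) (δ : ℝ) (h1 : |δ| ≤ 1) :
    |u (a + δ • EuclideanSpace.single i (1:ℝ)) - u a| ≤ K * |δ| := by
  rcases le_or_gt 0 δ with h0 | h0
  · rw [abs_of_nonneg h0] at *
    exact key_step hK hper hsc a i δ h0 h1
  · rw [abs_of_neg h0] at *
    have h := key_step hK hper hsc (a + δ • EuclideanSpace.single i (1:ℝ)) i (-δ)
      (by linarith) h1
    have hpt : a + δ • EuclideanSpace.single i (1:ℝ)
        + (-δ) • EuclideanSpace.single i (1:ℝ) = a := by module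
    rw [hpt] at h
    rwa [abs_sub_comm] at h

lemma tele (hK : 0 < K)
    (hper : ∀ (x : EuclideanSpace ℝ (Fin n)) (m : Fin n → ℤ), u (x + intVec n m) = u x)
    (hsc : ConcaveOn ℝ Set.univ
      (fun x : EuclideanSpace ℝ (Fin n) => u x - K * ‖x‖ ^ 2 / 2))
    (d : Fin n → ℝ) (hd : ∀ i, |d i| ≤ 1) (a : EuclideanSpace ℝ (Fin n))
    (S : Finset (Fin n)) :
    |u (a + ∑ i ∈ S, d i • EuclideanSpace.single i (1:ℝ)) - u a|
      ≤ K * ∑ i ∈ S, |d i| := by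
  classical
  induction S using Finset.induction_on with
  | empty => simp
  | @insert i S hiS ih =>
    rw [Finset.sum_insert hiS, Finset.sum_insert hiS]
    have hpt : a + (d i • EuclideanSpace.single i (1:ℝ)
        + ∑ j ∈ S, d j • EuclideanSpace.single j (1:ℝ))
        = (a + ∑ j ∈ S, d j • EuclideanSpace.single j (1:ℝ))
          + d i • EuclideanSpace.single i (1:ℝ) := by abel
    rw [hpt]
    set b := a + ∑ j ∈ S, d j • EuclideanSpace.single j (1:ℝ)
    calc |u (b + d i • EuclideanSpace.single i (1:ℝ)) - u a|
        ≤ |u (b + d i • EuclideanSpace.single i (1:ℝ)) - u b| + |u b - u a| := by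
          exact abs_sub_le _ _ _
      _ ≤ K * |d i| + K * ∑ j ∈ S, |d j| := by
          exact add_le_add (key_step' hK hper hsc b i (d i) (hd i)) ih
      _ = K * (|d i| + ∑ j ∈ S, |d j|) := by ring

end aux

/-- A `ℤⁿ`-periodic `K`-semi-concave function on `ℝⁿ` is Lipschitz with constant `K√n`. -/
theorem semiconcave_periodic_lipschitz (n : ℕ) (K : ℝ) (hK : 0 < K)
    (u : EuclideanSpace ℝ (Fin n) → ℝ)
    (hper : ∀ (x : EuclideanSpace ℝ (Fin n)) (m : Fin n → ℤ), u (x + intVec n m) = u x)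
    (hsc : ConcaveOn ℝ Set.univ
      (fun x : EuclideanSpace ℝ (Fin n) => u x - K * ‖x‖ ^ 2 / 2)) :
    ∀ x y : EuclideanSpace ℝ (Fin n), |u x - u y| ≤ K * Real.sqrt n * ‖x - y‖ := by
  intro x y
  set m : Fin n → ℤ := fun i => round (y i - x i) with hm
  set y' : EuclideanSpace ℝ (Fin n) := y + intVec n (fun i => -(m i)) with hy'
  have huy : u y' = u y := hper y _
  set d : Fin n → ℝ := fun i => x i - y' i with hd
  have hyi : ∀ i, y' i = y i - (m i : ℝ) := by
    intro i
    simp [hy', intVec]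
    ring
  have hdi : ∀ i, d i = -((y i - x i) - round (y i - x i)) := by
    intro i
    rw [hd]
    simp only [hyi, hm]
    ring
  have hd1 : ∀ i, |d i| ≤ 1 := by
    intro i
    rw [hdi i, abs_neg]
    calc |(y i - x i) - round (y i - x i)| ≤ 1/2 := abs_sub_round _
      _ ≤ 1 := by norm_num
  have hd2 : ∀ i, |d i| ≤ |x i - y i| := by
    intro i
    rcases le_or_gt (1/2 : ℝ) |x i - y i| with h | h
    · rw [hdi i, abs_neg]
      exact le_trans (abs_sub_round _) h
    · have hz : round (y i - x i) = 0 := by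
        rw [round_eq_zero_iff]
        rw [abs_lt] at h
        constructor <;> simp <;> linarith
      rw [hdi i, hz]
      simp [abs_sub_comm]
  have hx : x = y' + ∑ i, d i • EuclideanSpace.single i (1:ℝ) := by
    ext j
    have hsum : (∑ i, d i • EuclideanSpace.single i (1:ℝ)) j = d j := by
      rw [WithLp.ofLp_sum, Finset.sum_apply]
      simp [EuclideanSpace.single_apply, mul_ite]
    show x j = y' j + (∑ i, d i • EuclideanSpace.single i (1:ℝ)) j
    rw [hsum, hd]
    ring
  have h1 : |u x - u y| ≤ K * ∑ i, |d i| := by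
    rw [← huy]
    rw [hx]
    exact tele hK hper hsc d hd1 y' Finset.univ
  have h2 : (∑ i, |d i|) ≤ Real.sqrt n * ‖x - y‖ := by
    have hnorm : ‖x - y‖ = Real.sqrt (∑ i, (x i - y i) ^ 2) := by
      rw [EuclideanSpace.norm_eq]
      congr 1
      refine Finset.sum_congr rfl fun i _ => ?_
      rw [Real.norm_eq_abs, sq_abs]
      congr 1
    rw [hnorm, ← Real.sqrt_mul (by positivity)]
    rw [show ((n : ℝ) * ∑ i, (x i - y i) ^ 2) = ∑ i, (n : ℝ) * (x i - y i) ^ 2 from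
      Finset.mul_sum _ _ _]
    apply Real.le_sqrt_of_sq_le
    calc (∑ i, |d i|) ^ 2 ≤ (Finset.univ.card : ℝ) * ∑ i, |d i| ^ 2 :=
          sq_sum_le_card_mul_sum_sq
      _ = ∑ i, (n : ℝ) * |d i| ^ 2 := by
          rw [Finset.card_univ, Fintype.card_fin, Finset.mul_sum]
      _ ≤ ∑ i, (n : ℝ) * (x i - y i) ^ 2 := by
          apply Finset.sum_le_sum
          intro i _
          have h2 : |d i| ^ 2 ≤ (x i - y i) ^ 2 := by
            rw [← sq_abs (x i - y i)]
            exact pow_le_pow_left₀ (abs_nonneg _) (hd2 i) 2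
          exact mul_le_mul_of_nonneg_left h2 (Nat.cast_nonneg n)
  calc |u x - u y| ≤ K * ∑ i, |d i| := h1
    _ ≤ K * (Real.sqrt n * ‖x - y‖) := by
        apply mul_le_mul_of_nonneg_left h2 hK.le
    _ = K * Real.sqrt n * ‖x - y‖ := by ring
end

section
/- Let K > 0 and let u, v : ℝⁿ → ℝ be ℤⁿ-periodic K-semi-concave functions, and let I ⊂ ℝⁿ be the set of points where the sum u+v attains its minimum. Then u and v are differentiable at every point of I, and the gradient map x ↦ du(x) is 6K-Lipschitz on I. -/
open RealInnerProductSpace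


/-- Existence of a subgradient for a convex function on Euclidean space. -/
lemma exists_subgradient {n : ℕ} {f : EuclideanSpace ℝ (Fin n) → ℝ}
    (hf : ConvexOn ℝ Set.univ f) (x : EuclideanSpace ℝ (Fin n)) :
    ∃ p : EuclideanSpace ℝ (Fin n), ∀ y, f x + ⟪p, y - x⟫ ≤ f y := by
  have hcont : Continuous f := by
    have := hf.continuousOn isOpen_univ
    rwa [continuousOn_univ] at this
  set s : Set (EuclideanSpace ℝ (Fin n) × ℝ) := {q | f q.1 < q.2} with hs
  have hopen : IsOpen s := isOpen_lt (hcont.comp continuous_fst) continuous_snd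
  have hconv : Convex ℝ s := by
    rintro ⟨y1, t1⟩ h1 ⟨y2, t2⟩ h2 a b ha hb hab
    simp only [hs, Set.mem_setOf_eq] at h1 h2 ⊢
    have hle := hf.2 (Set.mem_univ y1) (Set.mem_univ y2) ha hb hab
    simp only [smul_eq_mul] at hle ⊢
    have : a * f y1 + b * f y2 < a * t1 + b * t2 := by
      rcases ha.lt_or_eq with ha' | ha'
      · rcases hb.lt_or_eq with hb' | hb'
        · exact add_lt_add (by nlinarith) (by nlinarith)
        · rw [← hb']; simp only [zero_mul, add_zero]; nlinarith
      · rw [← ha']; simp only [zero_mul, zero_add]; nlinarith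
    exact lt_of_le_of_lt hle this
  have hxs : ((x, f x) : EuclideanSpace ℝ (Fin n) × ℝ) ∉ s := by simp [hs]
  obtain ⟨ℓ, hℓ⟩ := geometric_hahn_banach_open_point hconv hopen hxs
  set c : ℝ := ℓ (0, 1) with hc
  set g : EuclideanSpace ℝ (Fin n) → ℝ := fun y => ℓ (y, 0) with hg
  have hdecomp : ∀ (y : EuclideanSpace ℝ (Fin n)) (t : ℝ), ℓ (y, t) = g y + t * c := by
    intro y t
    have : ((y, t) : EuclideanSpace ℝ (Fin n) × ℝ) = (y, 0) + t • ((0 : EuclideanSpace ℝ (Fin n)), (1 : ℝ)) := by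
      simp [Prod.ext_iff]
    rw [this, map_add, map_smul]
    simp [hg, hc, smul_eq_mul]
  have hcneg : c < 0 := by
    have h1 : ((x, f x + 1) : EuclideanSpace ℝ (Fin n) × ℝ) ∈ s := by simp [hs]
    have := hℓ _ h1
    rw [hdecomp, hdecomp] at this
    nlinarith
  have hkey : ∀ y : EuclideanSpace ℝ (Fin n), g y + f y * c ≤ g x + f x * c := by
    intro y
    by_contra hcon
    push_neg at hcon
    have hε : (0:ℝ) < (g y + f y * c - (g x + f x * c)) / (-c) :=
      div_pos (by linarith) (by linarith)
    have h1 : ((y, f y + (g y + f y * c - (g x + f x * c)) / (-c)) : EuclideanSpace ℝ (Fin n) × ℝ) ∈ s := by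
      simp only [hs, Set.mem_setOf_eq]; linarith
    have h2 := hℓ _ h1
    rw [hdecomp, hdecomp] at h2
    have hcc : ((g y + f y * c - (g x + f x * c)) / -c) * c
        = -(g y + f y * c - (g x + f x * c)) := by
      have hnc : (-c) ≠ 0 := by linarith
      rw [div_neg, neg_mul, div_mul_cancel₀ _ (by linarith : c ≠ 0)]
    rw [add_mul, hcc] at h2
    linarith
  set L : EuclideanSpace ℝ (Fin n) →L[ℝ] ℝ :=
    (-c)⁻¹ • (ℓ.comp (ContinuousLinearMap.inl ℝ (EuclideanSpace ℝ (Fin n)) ℝ)) with hL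
  refine ⟨(InnerProductSpace.toDual ℝ (EuclideanSpace ℝ (Fin n))).symm L, fun y => ?_⟩
  rw [InnerProductSpace.toDual_symm_apply]
  have hLz : L (y - x) = (-c)⁻¹ * (g y - g x) := by
    rw [hL]
    simp only [ContinuousLinearMap.smul_apply, ContinuousLinearMap.comp_apply, map_sub,
      smul_eq_mul]
    simp [hg, ContinuousLinearMap.inl_apply, mul_sub]
  rw [hLz]
  have ha' : (0:ℝ) < (-c)⁻¹ := inv_pos.mpr (by linarith)
  have ha : (-c)⁻¹ * (-c) = 1 := inv_mul_cancel₀ (by linarith)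
  have h3 := mul_le_mul_of_nonneg_left (hkey y) ha'.le
  have hc0 : c ≠ 0 := hcneg.ne
  have hnc : (-c) ≠ 0 := by linarith
  have e1 : (-c)⁻¹ * (f y * c) = -f y := by field_simp
  have e2 : (-c)⁻¹ * (f x * c) = -f x := by field_simp
  rw [mul_add, mul_add, e1, e2] at h3
  rw [mul_sub]
  linarith

section aux
variable {n : ℕ}


/-- A `K`-semi-concave function has a quadratic upper support at every point. -/
lemma exists_supergradient_quadratic {K : ℝ} {u : EuclideanSpace ℝ (Fin n) → ℝ}
    (husc : ConcaveOn ℝ Set.univ (fun x : EuclideanSpace ℝ (Fin n) => u x - K * ‖x‖ ^ 2 / 2))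
    (x : EuclideanSpace ℝ (Fin n)) :
    ∃ p : EuclideanSpace ℝ (Fin n),
      ∀ y, u y ≤ u x + ⟪p, y - x⟫ + K / 2 * ‖y - x‖ ^ 2 := by
  have hconv : ConvexOn ℝ Set.univ
      (fun y : EuclideanSpace ℝ (Fin n) => K * ‖y‖ ^ 2 / 2 - u y) := by
    have h := husc.neg
    have heq : (fun y : EuclideanSpace ℝ (Fin n) => K * ‖y‖ ^ 2 / 2 - u y)
        = (-fun x : EuclideanSpace ℝ (Fin n) => u x - K * ‖x‖ ^ 2 / 2) := by
      funext y; simp only [Pi.neg_apply]; ring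
    rw [heq]; exact h
  obtain ⟨p₀, hp₀⟩ := exists_subgradient hconv x
  refine ⟨K • x - p₀, fun y => ?_⟩
  have h := hp₀ y
  have hexp : ‖y‖ ^ 2 = ‖x‖ ^ 2 + 2 * ⟪x, y - x⟫ + ‖y - x‖ ^ 2 := by
    have h2 := norm_add_sq_real x (y - x)
    have h3 : x + (y - x) = y := by abel
    rw [h3] at h2
    linarith
  have hinner : ⟪K • x - p₀, y - x⟫ = K * ⟪x, y - x⟫ - ⟪p₀, y - x⟫ := by
    rw [inner_sub_left, real_inner_smul_left]
  rw [hinner]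
  have hKexp : K * ‖y‖ ^ 2 / 2
      = K * ‖x‖ ^ 2 / 2 + K * ⟪x, y - x⟫ + K / 2 * ‖y - x‖ ^ 2 := by
    rw [hexp]; ring
  linarith
/-- Two-sided quadratic bound gives differentiability. -/
lemma hasFDerivAt_of_quadratic_bound {K : ℝ} (hK : 0 < K)
    {u : EuclideanSpace ℝ (Fin n) → ℝ} {p x : EuclideanSpace ℝ (Fin n)}
    (h : ∀ y, |u y - u x - ⟪p, y - x⟫| ≤ K / 2 * ‖y - x‖ ^ 2) :
    HasFDerivAt u (innerSL ℝ p) x := by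
  rw [hasFDerivAt_iff_isLittleO_nhds_zero]
  rw [Asymptotics.isLittleO_iff]
  intro c hc
  filter_upwards [Metric.ball_mem_nhds (0 : EuclideanSpace ℝ (Fin n))
    (show (0:ℝ) < 2 * c / K by positivity)] with z hz
  rw [mem_ball_zero_iff] at hz
  have h1 := h (x + z)
  have h2 : x + z - x = z := by abel
  rw [h2] at h1
  have h3 : (innerSL ℝ p) z = ⟪p, z⟫ := rfl
  rw [Real.norm_eq_abs, h3]
  calc |u (x + z) - u x - ⟪p, z⟫| ≤ K / 2 * ‖z‖ ^ 2 := h1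
    _ ≤ c * ‖z‖ := by
        have hz2 : ‖z‖ * K < 2 * c := by rwa [lt_div_iff₀ hK] at hz
        nlinarith [norm_nonneg z]

/-- At a minimum point of `u + v`, both functions are differentiable with opposite gradients,
and two-sided quadratic bounds hold for `u`. -/
lemma key_min_lemma {K : ℝ} (hK : 0 < K) {u v : EuclideanSpace ℝ (Fin n) → ℝ}
    (husc : ConcaveOn ℝ Set.univ (fun x : EuclideanSpace ℝ (Fin n) => u x - K * ‖x‖ ^ 2 / 2))
    (hvsc : ConcaveOn ℝ Set.univ (fun x : EuclideanSpace ℝ (Fin n) => v x - K * ‖x‖ ^ 2 / 2))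
    {x : EuclideanSpace ℝ (Fin n)} (hx : ∀ y, u x + v x ≤ u y + v y) :
    ∃ p : EuclideanSpace ℝ (Fin n),
      (∀ y, u y ≤ u x + ⟪p, y - x⟫ + K / 2 * ‖y - x‖ ^ 2) ∧
      (∀ y, u x + ⟪p, y - x⟫ - K / 2 * ‖y - x‖ ^ 2 ≤ u y) ∧
      HasFDerivAt u (innerSL ℝ p) x ∧ HasFDerivAt v (innerSL ℝ (-p)) x := by
  obtain ⟨p, hp⟩ := exists_supergradient_quadratic husc x
  obtain ⟨q, hq⟩ := exists_supergradient_quadratic hvsc x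
  -- p + q = 0
  have hs : ∀ y, (0:ℝ) ≤ ⟪p, y - x⟫ + ⟪q, y - x⟫ + K * ‖y - x‖ ^ 2 := by
    intro y
    have h0 := hx y
    have h1 := hp y
    have h2 := hq y
    linarith
  have hpq : q = -p := by
    have hN : ‖p + q‖ ^ 2 ≤ 0 := by
      have h := hs (x - (2 * K)⁻¹ • (p + q))
      have hv : x - (2 * K)⁻¹ • (p + q) - x = -((2 * K)⁻¹ • (p + q)) := by abel
      rw [hv] at h
      have hi : ⟪p, -((2 * K)⁻¹ • (p + q))⟫ + ⟪q, -((2 * K)⁻¹ • (p + q))⟫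
          = -((2 * K)⁻¹ * ‖p + q‖ ^ 2) := by
        rw [inner_neg_right, inner_neg_right, real_inner_smul_right, real_inner_smul_right,
          ← neg_add, ← mul_add, ← inner_add_left, real_inner_self_eq_norm_sq]
      have hn : ‖-((2 * K)⁻¹ • (p + q))‖ = (2 * K)⁻¹ * ‖p + q‖ := by
        rw [norm_neg, norm_smul, Real.norm_eq_abs, abs_of_pos (by positivity)]
      rw [hn] at h
      have hb : (0:ℝ) < (2 * K)⁻¹ := by positivity
      have hexp2 : K * ((2 * K)⁻¹ * ‖p + q‖) ^ 2 = (2 * K)⁻¹ * ‖p + q‖ ^ 2 / 2 := by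
        have : K ≠ 0 := ne_of_gt hK
        field_simp
      rw [hi, hexp2] at h
      nlinarith [hb]
    have : p + q = 0 := by
      have h0 : ‖p + q‖ = 0 := by nlinarith [norm_nonneg (p + q)]
      exact norm_eq_zero.mp h0
    linear_combination (norm := module) this
  subst hpq
  have hlow_u : ∀ y, u x + ⟪p, y - x⟫ - K / 2 * ‖y - x‖ ^ 2 ≤ u y := by
    intro y
    have h0 := hx y
    have h2 := hq y
    rw [inner_neg_left] at h2
    linarith
  have hlow_v : ∀ y, v x + ⟪-p, y - x⟫ - K / 2 * ‖y - x‖ ^ 2 ≤ v y := by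
    intro y
    have h0 := hx y
    have h1 := hp y
    rw [inner_neg_left]
    linarith
  refine ⟨p, hp, hlow_u, ?_, ?_⟩
  · exact hasFDerivAt_of_quadratic_bound hK fun y =>
      abs_le.mpr ⟨by linarith [hlow_u y], by linarith [hp y]⟩
  · exact hasFDerivAt_of_quadratic_bound hK fun y =>
      abs_le.mpr ⟨by linarith [hlow_v y], by linarith [hq y]⟩



end aux

set_option maxHeartbeats 1000000 in
/-- If `u, v` are `ℤⁿ`-periodic `K`-semi-concave functions and `I` is the set of minima of
`u + v`, then `u` and `v` are differentiable at every point of `I` and `x ↦ du(x)` is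
`6K`-Lipschitz on `I`. -/
theorem semiconcave_pair_gradient_lipschitz (n : ℕ) (K : ℝ) (hK : 0 < K)
    (u v : EuclideanSpace ℝ (Fin n) → ℝ)
    (huper : ∀ (x : EuclideanSpace ℝ (Fin n)) (m : Fin n → ℤ), u (x + intVec n m) = u x)
    (hvper : ∀ (x : EuclideanSpace ℝ (Fin n)) (m : Fin n → ℤ), v (x + intVec n m) = v x)
    (husc : ConcaveOn ℝ Set.univ
      (fun x : EuclideanSpace ℝ (Fin n) => u x - K * ‖x‖ ^ 2 / 2))
    (hvsc : ConcaveOn ℝ Set.univ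
      (fun x : EuclideanSpace ℝ (Fin n) => v x - K * ‖x‖ ^ 2 / 2)) :
    (∀ x ∈ {z : EuclideanSpace ℝ (Fin n) | ∀ y, u z + v z ≤ u y + v y},
      DifferentiableAt ℝ u x ∧ DifferentiableAt ℝ v x) ∧
    (∀ x ∈ {z : EuclideanSpace ℝ (Fin n) | ∀ y, u z + v z ≤ u y + v y},
      ∀ x' ∈ {z : EuclideanSpace ℝ (Fin n) | ∀ y, u z + v z ≤ u y + v y},
        ‖fderiv ℝ u x - fderiv ℝ u x'‖ ≤ 6 * K * ‖x - x'‖) := by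

  have key : ∀ x : EuclideanSpace ℝ (Fin n), (∀ y, u x + v x ≤ u y + v y) →
      ∃ p : EuclideanSpace ℝ (Fin n),
        (∀ y, u y ≤ u x + ⟪p, y - x⟫ + K / 2 * ‖y - x‖ ^ 2) ∧
        (∀ y, u x + ⟪p, y - x⟫ - K / 2 * ‖y - x‖ ^ 2 ≤ u y) ∧
        HasFDerivAt u (innerSL ℝ p) x ∧ HasFDerivAt v (innerSL ℝ (-p)) x :=
    fun x hx => key_min_lemma hK husc hvsc hx
  choose! P h1 h2 h3 h4 using key
  constructor
  · intro x hx
    exact ⟨(h3 x hx).differentiableAt, (h4 x hx).differentiableAt⟩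
  · intro x hx x' hx'
    simp only [Set.mem_setOf_eq] at hx hx'
    by_cases hxx : x = x'
    · subst hxx
      simp only [sub_self, norm_zero]
      positivity
    · have hfd : fderiv ℝ u x = innerSL ℝ (P x) := (h3 x hx).fderiv
      have hfd' : fderiv ℝ u x' = innerSL ℝ (P x') := (h3 x' hx').fderiv
      rw [hfd, hfd', ← map_sub, innerSL_apply_norm]
      set s : EuclideanSpace ℝ (Fin n) := P x - P x' with hsdef
      set d : EuclideanSpace ℝ (Fin n) := x' - x with hddef
      have hnd : ‖x - x'‖ = ‖d‖ := by rw [hddef, norm_sub_rev]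
      rw [hnd]
      have hd0 : d ≠ 0 := by
        rw [hddef, sub_ne_zero]
        exact fun h => hxx h.symm
      have hdpos : (0:ℝ) < ‖d‖ := norm_pos_iff.mpr hd0
      -- key inequality
      have hkey : ∀ z : EuclideanSpace ℝ (Fin n),
          ⟪s, z⟫ ≤ K / 2 * (‖d‖ ^ 2 + ‖d + z‖ ^ 2 + ‖z‖ ^ 2) := by
        intro z
        have hA := h2 x hx (x' + z)
        have hB := h1 x' hx' (x' + z)
        have hC := h1 x hx x'
        have e1 : x' + z - x' = z := by abel
        have e2 : x' + z - x = d + z := by rw [hddef]; abel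
        have e3 : x' - x = d := by rw [hddef]
        rw [e1] at hB
        rw [e2] at hA
        rw [e3] at hC
        rw [inner_add_right] at hA
        rw [hsdef, inner_sub_left]
        linarith
      by_cases hps : s = 0
      · rw [hps, norm_zero]
        positivity
      · have hspos : (0:ℝ) < ‖s‖ := norm_pos_iff.mpr hps
        have h := hkey ((‖d‖ / ‖s‖) • s)
        have hi : ⟪s, (‖d‖ / ‖s‖) • s⟫ = ‖d‖ * ‖s‖ := by
          rw [real_inner_smul_right, real_inner_self_eq_norm_sq]
          field_simp
        have hnh : ‖(‖d‖ / ‖s‖) • s‖ = ‖d‖ := by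
          rw [norm_smul, Real.norm_eq_abs, abs_of_pos (by positivity)]
          field_simp
        rw [hi, hnh] at h
        have hsum : ‖d + (‖d‖ / ‖s‖) • s‖ ≤ 2 * ‖d‖ := by
          calc ‖d + (‖d‖ / ‖s‖) • s‖ ≤ ‖d‖ + ‖(‖d‖ / ‖s‖) • s‖ := norm_add_le _ _
            _ = 2 * ‖d‖ := by rw [hnh]; ring
        have hsq : ‖d + (‖d‖ / ‖s‖) • s‖ ^ 2 ≤ 4 * ‖d‖ ^ 2 := by
          nlinarith [norm_nonneg (d + (‖d‖ / ‖s‖) • s)]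
        have hKhalf : (0:ℝ) ≤ K / 2 := by positivity
        have h2' := mul_le_mul_of_nonneg_left hsq hKhalf
        have h' : ‖d‖ * ‖s‖ ≤ ‖d‖ * (3 * K * ‖d‖) := by nlinarith [h, h2']
        have h'' : ‖s‖ ≤ 3 * K * ‖d‖ := le_of_mul_le_mul_left h' hdpos
        nlinarith [h'', mul_nonneg (le_of_lt hK) (le_of_lt hdpos)]
end
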